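/- arXiv:1904.10357 — 9 statements merged into one kernel-verified Lean document; each statement's English description precedes it below -/
import Mathlib

section
/- Let m ∈ ℕ and let G be an abelian group in which every element has order at most m. Suppose A is a finite symmetric subset of G containing 0 such that |A + A| ≤ K·|A|. Then A is contained in a finite subgroup H of G with |H| ≤ m^(K⁴)·K·|A|. -/
open Finset Pointwise

/-- The subgroup generated by a finite set `F`, in a group where all orders are at most `m`,
is covered by a finset of size at most `m ^ F.card`. -/
lemma closure_card_le_aux {G : Type*} [AddCommGroup G] [DecidableEq G]
    (m : ℕ) (horder : ∀ g : G, 0 < addOrderOf g ∧ addOrderOf g ≤ m)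
    (F : Finset G) :
    ∃ B : Finset G, ((AddSubgroup.closure (F : Set G) : Set G) ⊆ ↑B) ∧
      B.card ≤ m ^ F.card := by
  classical
  have hm : 1 ≤ m := le_trans (horder 0).1 (horder 0).2
  set B : Finset G := (F.pi fun _ => Finset.range m).image
    (fun c => ∑ x ∈ F.attach, c x.1 x.2 • x.1) with hBdef
  have hmemB : ∀ c : (∀ a ∈ F, ℕ), (∀ a ha, c a ha < m) →
      (∑ x ∈ F.attach, c x.1 x.2 • x.1) ∈ B := by
    intro c hc
    exact Finset.mem_image.2 ⟨c, Finset.mem_pi.2 fun a ha => Finset.mem_range.2 (hc a ha), rfl⟩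
  have hrep : ∀ b ∈ B, ∃ c : (∀ a ∈ F, ℕ), (∀ a ha, c a ha < m) ∧
      (∑ x ∈ F.attach, c x.1 x.2 • x.1) = b := by
    intro b hb
    obtain ⟨c, hc, rfl⟩ := Finset.mem_image.1 hb
    exact ⟨c, fun a ha => Finset.mem_range.1 (Finset.mem_pi.1 hc a ha), rfl⟩
  -- B is the carrier of a subgroup
  have hzero : (0 : G) ∈ B := by
    have := hmemB (fun _ _ => 0) (fun _ _ => hm)
    simpa using this
  have hadd : ∀ a ∈ B, ∀ b ∈ B, a + b ∈ B := by
    intro a ha b hb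
    obtain ⟨c, hc, rfl⟩ := hrep a ha
    obtain ⟨d, hd, rfl⟩ := hrep b hb
    have := hmemB (fun x hx => (c x hx + d x hx) % addOrderOf x)
      (fun x hx => lt_of_lt_of_le (Nat.mod_lt _ (horder x).1) (horder x).2)
    have hsum : (∑ x ∈ F.attach, ((c x.1 x.2 + d x.1 x.2) % addOrderOf x.1) • x.1)
        = (∑ x ∈ F.attach, c x.1 x.2 • x.1) + (∑ x ∈ F.attach, d x.1 x.2 • x.1) := by
      rw [← Finset.sum_add_distrib]
      refine Finset.sum_congr rfl fun x _ => ?_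
      rw [mod_addOrderOf_nsmul, add_nsmul]
    rwa [hsum] at this
  have hneg : ∀ a ∈ B, -a ∈ B := by
    intro a ha
    obtain ⟨c, hc, rfl⟩ := hrep a ha
    have := hmemB (fun x hx => (addOrderOf x - c x hx % addOrderOf x) % addOrderOf x)
      (fun x hx => lt_of_lt_of_le (Nat.mod_lt _ (horder x).1) (horder x).2)
    have hsum : (∑ x ∈ F.attach,
        ((addOrderOf x.1 - c x.1 x.2 % addOrderOf x.1) % addOrderOf x.1) • x.1)
        = -(∑ x ∈ F.attach, c x.1 x.2 • x.1) := by
      rw [eq_neg_iff_add_eq_zero, ← Finset.sum_add_distrib]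
      refine Finset.sum_eq_zero fun x _ => ?_
      set o := addOrderOf x.1 with ho
      have hopos : 0 < o := (horder x.1).1
      have hr : c x.1 x.2 % o < o := Nat.mod_lt _ hopos
      rw [← mod_addOrderOf_nsmul x.1 (c x.1 x.2), ← ho, ← add_nsmul]
      rcases Nat.eq_zero_or_pos (c x.1 x.2 % o) with h0 | hpos
      · rw [h0, Nat.sub_zero, Nat.mod_self, add_zero, zero_nsmul]
      · have : o - c x.1 x.2 % o < o := by omega
        rw [Nat.mod_eq_of_lt this, Nat.sub_add_cancel hr.le, ho, addOrderOf_nsmul_eq_zero]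
    rwa [hsum] at this
  have hFsub : (F : Set G) ⊆ ↑B := by
    intro x hx
    simp only [Finset.mem_coe] at hx ⊢
    have := hmemB (fun y hy => if y = x then 1 % addOrderOf x else 0)
      (fun y hy => by
        show (if y = x then 1 % addOrderOf x else 0) < m
        split
        · exact lt_of_lt_of_le (Nat.mod_lt _ (horder x).1) (horder x).2
        · exact hm)
    have hsum : (∑ y ∈ F.attach, (if y.1 = x then 1 % addOrderOf x else 0) • y.1) = x := by
      rw [Finset.sum_eq_single (⟨x, hx⟩ : {y // y ∈ F})]
      · simp [mod_addOrderOf_nsmul]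
      · intro b _ hb
        have : b.1 ≠ x := fun h => hb (Subtype.ext h)
        simp [this]
      · intro h
        exact absurd (Finset.mem_attach _ _) h
    rwa [hsum] at this
  let H' : AddSubgroup G :=
    { carrier := ↑B
      zero_mem' := hzero
      add_mem' := fun {a b} ha hb => hadd a ha b hb
      neg_mem' := fun {a} ha => hneg a ha }
  refine ⟨B, ?_, ?_⟩
  · have : AddSubgroup.closure (F : Set G) ≤ H' :=
      (AddSubgroup.closure_le H').2 hFsub
    exact fun x hx => this hx
  · calc B.card ≤ (F.pi fun _ => Finset.range m).card := Finset.card_image_le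
      _ = m ^ F.card := by
        rw [Finset.card_pi]
        simp

theorem stmt_5 {G : Type*} [AddCommGroup G] [DecidableEq G]
    (m : ℕ) (horder : ∀ g : G, 0 < addOrderOf g ∧ addOrderOf g ≤ m)
    (A : Finset G) (K : ℝ) (hK : 1 ≤ K)
    (hsym : -A = A) (h0 : (0 : G) ∈ A)
    (hdoub : ((A + A).card : ℝ) ≤ K * A.card) :
    ∃ H : AddSubgroup G, (A : Set G) ⊆ H ∧
      (Nat.card H : ℝ) ≤ (m : ℝ) ^ (K ^ 4) * K * A.card := by
  classical
  have hA : A.Nonempty := ⟨0, h0⟩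
  have hApos : (0 : ℝ) < A.card := by
    exact_mod_cast Finset.card_pos.2 hA
  have hm : 1 ≤ m := le_trans (horder 0).1 (horder 0).2
  -- Plünnecke–Ruzsa: |4A| ≤ K⁴ |A|
  have hP := Finset.pluennecke_ruzsa_inequality_nsmul_add hA A 4
  have h4eq : (4 : ℕ) • A = A + A + A + A := by
    rw [show (4 : ℕ) = 3 + 1 from rfl, succ_nsmul, show (3 : ℕ) = 2 + 1 from rfl, succ_nsmul,
      show (2 : ℕ) = 1 + 1 from rfl, succ_nsmul, one_nsmul]
  have hP' : ((A + A + A + A).card : ℝ) ≤ K ^ 4 * A.card := by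
    rw [h4eq] at hP
    have hPr : ((A + A + A + A).card : ℝ)
        ≤ (((A + A).card : ℝ) / A.card) ^ 4 * A.card := by
      have h2 : (((A + A + A + A).card : ℚ≥0) : ℝ)
          ≤ (((((A + A).card : ℚ≥0) / ((A.card : ℚ≥0))) ^ 4 * (A.card : ℚ≥0) : ℚ≥0) : ℝ) := by
        exact_mod_cast hP
      push_cast at h2
      exact h2
    have hdiv : (((A + A).card : ℝ) / A.card) ≤ K := by
      rw [div_le_iff₀ hApos]; exact hdoub
    calc ((A + A + A + A).card : ℝ) ≤ (((A + A).card : ℝ) / A.card) ^ 4 * A.card := hPr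
      _ ≤ K ^ 4 * A.card := by gcongr
  -- Ruzsa covering: 3A ⊆ F + (A - A) = F + (A + A)
  have hcovh : (((A + A + A) + A).card : ℝ) ≤ K ^ 4 * A.card := hP'
  obtain ⟨F, hFsub3, hFcard, hFcov⟩ := Finset.ruzsa_covering_add hA hcovh
  have hAA : A - A = A + A := by rw [sub_eq_add_neg, hsym]
  rw [hAA] at hFcov
  -- hFcov : A + A + A ⊆ F + (A + A)
  set H := AddSubgroup.closure (A : Set G) with hHdef
  refine ⟨H, AddSubgroup.subset_closure, ?_⟩
  obtain ⟨B, hBsub, hBcard⟩ := closure_card_le_aux m horder F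
  -- key: (A+A)+(A+A) ⊆ F + F + (A+A)
  have h44 : (A + A) + (A + A) ⊆ F + F + (A + A) := by
    calc (A + A) + (A + A) = (A + A + A) + A := by rw [add_assoc, add_assoc, add_assoc]
      _ ⊆ (F + (A + A)) + A := Finset.add_subset_add_right hFcov
      _ = F + (A + A + A) := by rw [add_assoc, add_assoc]
      _ ⊆ F + (F + (A + A)) := Finset.add_subset_add_left hFcov
      _ = F + F + (A + A) := by rw [add_assoc]
  have hnegAA : ∀ s ∈ A + A, -s ∈ A + A := by
    intro s hs
    obtain ⟨u, hu, v, hv, rfl⟩ := Finset.mem_add.1 hs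
    have hu' : -u ∈ A := by rw [← hsym]; exact Finset.neg_mem_neg hu
    have hv' : -v ∈ A := by rw [← hsym]; exact Finset.neg_mem_neg hv
    rw [neg_add]
    exact Finset.add_mem_add hu' hv'
  -- every element of H lies in closure(F) + (A+A)
  have key : ∀ g ∈ H, g ∈ (↑(AddSubgroup.closure (F : Set G)) : Set G) + ↑(A + A) := by
    intro g hg
    induction hg using AddSubgroup.closure_induction with
    | mem x hx =>
        refine ⟨0, AddSubgroup.zero_mem _, x, ?_, by simp⟩
        have : x + 0 ∈ A + A := Finset.add_mem_add hx h0
        rw [add_zero] at this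
        exact_mod_cast this
    | zero =>
        refine ⟨0, AddSubgroup.zero_mem _, 0, ?_, by simp⟩
        have : (0 : G) + 0 ∈ A + A := Finset.add_mem_add h0 h0
        rw [add_zero] at this
        exact_mod_cast this
    | add x y hx hy ihx ihy =>
        obtain ⟨c, hc, s, hs, rfl⟩ := ihx
        obtain ⟨d, hd, t, ht, rfl⟩ := ihy
        have hst : s + t ∈ F + F + (A + A) := by
          apply h44
          exact Finset.add_mem_add hs ht
        obtain ⟨ff, hff, u, hu, hfu⟩ := Finset.mem_add.1 hst
        obtain ⟨f1, hf1, f2, hf2, rfl⟩ := Finset.mem_add.1 hff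
        refine ⟨c + d + (f1 + f2), ?_, u, hu, ?_⟩
        · exact AddSubgroup.add_mem _ (AddSubgroup.add_mem _ hc hd)
            (AddSubgroup.add_mem _ (AddSubgroup.subset_closure hf1)
              (AddSubgroup.subset_closure hf2))
        · show c + d + (f1 + f2) + u = (c + s) + (d + t)
          calc c + d + (f1 + f2) + u = (c + d) + (f1 + f2 + u) := by abel
            _ = (c + d) + (s + t) := by rw [hfu]
            _ = (c + s) + (d + t) := by abel
    | neg x hx ih =>
        obtain ⟨c, hc, s, hs, rfl⟩ := ih
        exact ⟨-c, AddSubgroup.neg_mem _ hc, -s, hnegAA s hs, by rw [neg_add]⟩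
  have key2 : (H : Set G) ⊆ ↑(B + (A + A)) := by
    intro g hg
    obtain ⟨c, hc, s, hs, rfl⟩ := key g hg
    rw [Finset.coe_add]
    exact Set.add_mem_add (hBsub hc) hs
  have hcard : Nat.card H ≤ (B + (A + A)).card := by
    have h1 : Nat.card H = (H : Set G).ncard := Nat.card_coe_set_eq _
    rw [h1]
    have := Set.ncard_le_ncard key2 (Finset.finite_toSet _)
    rwa [Set.ncard_coe_finset] at this
  have hBr : (B.card : ℝ) ≤ (m : ℝ) ^ (K ^ 4) := by
    have h1 : (B.card : ℝ) ≤ (m : ℝ) ^ (F.card : ℕ) := by exact_mod_cast hBcard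
    have h2 : (m : ℝ) ^ (F.card : ℕ) = (m : ℝ) ^ ((F.card : ℕ) : ℝ) :=
      (Real.rpow_natCast _ _).symm
    have h3 : (m : ℝ) ^ ((F.card : ℕ) : ℝ) ≤ (m : ℝ) ^ (K ^ 4) := by
      apply Real.rpow_le_rpow_of_exponent_le (by exact_mod_cast hm)
      exact hFcard
    calc (B.card : ℝ) ≤ (m : ℝ) ^ (F.card : ℕ) := h1
      _ = (m : ℝ) ^ ((F.card : ℕ) : ℝ) := h2
      _ ≤ (m : ℝ) ^ (K ^ 4) := h3
  calc (Nat.card H : ℝ) ≤ ((B + (A + A)).card : ℝ) := by exact_mod_cast hcard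
    _ ≤ (B.card : ℝ) * ((A + A).card : ℝ) := by exact_mod_cast Finset.card_add_le
    _ ≤ (m : ℝ) ^ (K ^ 4) * (K * A.card) := by
      apply mul_le_mul hBr hdoub (by positivity) (by positivity)
    _ = (m : ℝ) ^ (K ^ 4) * K * A.card := by ring
end

section
/- (Plünnecke–Ruzsa) Let G be an abelian group and A a finite nonempty subset with |A + A| ≤ K·|A|. Then for all natural numbers m, n with m + n ≥ 1, |mA − nA| ≤ K^(m+n)·|A|. -/
open Finset Pointwise

theorem stmt_6 {G : Type*} [AddCommGroup G] [DecidableEq G]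
    (A : Finset G) (hA : A.Nonempty) (K : ℝ) (hK : 1 ≤ K)
    (hdoub : ((A + A).card : ℝ) ≤ K * A.card)
    (m n : ℕ) (hmn : 1 ≤ m + n) :
    ((m • A - n • A).card : ℝ) ≤ K ^ (m + n) * A.card := by
  have h := Finset.pluennecke_ruzsa_inequality_nsmul_sub_nsmul_add hA A m n
  have hA0 : (0 : ℝ) < A.card := by exact_mod_cast hA.card_pos
  have h' : ((m • A - n • A).card : ℝ) ≤ ((A + A).card / A.card) ^ (m + n) * A.card := by
    have := (NNRat.cast_le (K := ℝ)).2 h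
    push_cast at this
    convert this using 3
  calc ((m • A - n • A).card : ℝ) ≤ ((A + A).card / A.card) ^ (m + n) * A.card := h'
    _ ≤ K ^ (m + n) * A.card := by
        have : ((A + A).card / A.card : ℝ) ≤ K := by
          rw [div_le_iff₀ hA0]; linarith
        gcongr
end

section
/- (Ruzsa) Let A be a finite symmetric subset of a group G containing the identity with |A³| ≤ K·|A|. Then for every m ≥ 3, |A^m| ≤ K^(m−2)·|A|. -/
open Finset Pointwise

theorem stmt_9 {G : Type*} [Group G] [DecidableEq G]
    (A : Finset G) (K : ℝ) (hK : 1 ≤ K)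
    (hsym : A⁻¹ = A) (hone : (1 : G) ∈ A)
    (h3 : ((A ^ 3).card : ℝ) ≤ K * A.card)
    (m : ℕ) (hm : 3 ≤ m) :
    ((A ^ m).card : ℝ) ≤ K ^ (m - 2) * A.card := by
  have hApos : (0 : ℝ) < A.card := by
    exact_mod_cast Finset.card_pos.2 ⟨1, hone⟩
  have hinv : ∀ k : ℕ, (A ^ k)⁻¹ = A ^ k := by
    intro k
    induction k with
    | zero => simp
    | succ k ih =>
      conv_lhs => rw [pow_succ]
      rw [mul_inv_rev, hsym, ih, ← pow_succ']
  induction m, hm using Nat.le_induction with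
  | base => simpa using h3
  | succ n hn ih =>
    have key : ((A ^ (n - 1)) / (A ^ 2)).card * A.card ≤
        ((A ^ (n - 1)) / A).card * ((A ^ 2) / A).card :=
      Finset.ruzsa_triangle_inequality_div_div_div _ _ _
    have h1 : A ^ (n - 1) / A ^ 2 = A ^ (n + 1) := by
      rw [div_eq_mul_inv, hinv, ← pow_add]; congr 1; omega
    have h2 : A ^ (n - 1) / A = A ^ n := by
      rw [div_eq_mul_inv, hsym, ← pow_succ]; congr 1; omega
    have h3' : A ^ 2 / A = A ^ 3 := by
      rw [div_eq_mul_inv, hsym, ← pow_succ]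
    rw [h1, h2, h3'] at key
    have keyR : ((A ^ (n + 1)).card : ℝ) * A.card ≤ (A ^ n).card * (A ^ 3).card := by
      exact_mod_cast key
    have step : ((A ^ (n + 1)).card : ℝ) ≤ K * (A ^ n).card :=
      le_of_mul_le_mul_right
        (keyR.trans (by nlinarith [h3, Nat.cast_nonneg (α := ℝ) (A ^ n).card])) hApos
    calc ((A ^ (n + 1)).card : ℝ) ≤ K * (A ^ n).card := step
      _ ≤ K * (K ^ (n - 2) * A.card) := by
          exact mul_le_mul_of_nonneg_left ih (by linarith)
      _ = K ^ (n + 1 - 2) * A.card := by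
          rw [← mul_assoc, ← pow_succ']; congr 2; omega
end

section
/- Let A be a finite symmetric subset of a group G containing the identity with |A³| ≤ K·|A|. Then A² is a K⁴-approximate subgroup of G. -/
open Finset Pointwise

theorem stmt_10 {G : Type*} [Group G] [DecidableEq G]
    (A : Finset G) (K : ℝ) (hK : 1 ≤ K)
    (hsym : A⁻¹ = A) (hone : (1 : G) ∈ A)
    (h3 : ((A ^ 3).card : ℝ) ≤ K * A.card) :
    (A ^ 2)⁻¹ = A ^ 2 ∧ (1 : G) ∈ A ^ 2 ∧
      ∃ X : Finset G, (X.card : ℝ) ≤ K ^ 4 ∧ (A ^ 2) * (A ^ 2) ⊆ X * (A ^ 2) := by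
  have hAne : A.Nonempty := ⟨1, hone⟩
  have hApos : (0 : ℝ) < A.card := by exact_mod_cast hAne.card_pos
  have hdiv : A / A = A ^ 2 := by
    rw [div_eq_mul_inv, hsym, sq]
  have hinv2 : (A ^ 2)⁻¹ = A ^ 2 := by
    rw [sq, mul_inv_rev, hsym]
  -- |A⁴| ≤ K² |A| via Ruzsa triangle inequality
  have htri := Finset.ruzsa_triangle_inequality_div_mul_mul (A ^ 2) A (A ^ 2)
  have hdd : A ^ 2 / A ^ 2 = A ^ 4 := by
    rw [div_eq_mul_inv, hinv2, ← pow_add]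
  have h21 : A ^ 2 * A = A ^ 3 := by rw [← pow_succ]
  have h12 : A * A ^ 2 = A ^ 3 := by rw [← pow_succ']
  rw [hdd, h21] at htri
  have h4 : ((A ^ 4).card : ℝ) ≤ K ^ 2 * A.card := by
    have : ((A ^ 4).card : ℝ) * A.card ≤ (A ^ 3).card * (A ^ 3).card := by
      exact_mod_cast htri
    have h2 : ((A ^ 3).card : ℝ) * (A ^ 3).card ≤ (K * A.card) * (K * A.card) := by
      have h0 : (0 : ℝ) ≤ (A ^ 3).card := by positivity
      exact mul_le_mul h3 h3 h0 (by positivity)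
    nlinarith
  -- Ruzsa covering
  have h31 : A ^ 3 * A = A ^ 4 := by rw [← pow_succ]
  have hcov : ((A ^ 3 * A).card : ℝ) ≤ K ^ 2 * A.card := by rw [h31]; exact h4
  obtain ⟨F, hFsub, hFcard, hFcover⟩ := Finset.ruzsa_covering_mul hAne hcov
  rw [hdiv] at hFcover
  refine ⟨hinv2, by rw [sq]; simpa using mul_mem_mul hone hone, F * F, ?_, ?_⟩
  · have hFpos : (0 : ℝ) ≤ F.card := by positivity
    calc ((F * F).card : ℝ) ≤ F.card * F.card := by
          exact_mod_cast Finset.card_mul_le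
      _ ≤ K ^ 2 * K ^ 2 := mul_le_mul hFcard hFcard hFpos (by positivity)
      _ = K ^ 4 := by ring
  · calc A ^ 2 * A ^ 2 = A ^ 3 * A := by rw [← pow_add, ← pow_succ]
      _ ⊆ (F * A ^ 2) * A := mul_subset_mul_right hFcover
      _ = F * A ^ 3 := by rw [mul_assoc, h21]
      _ ⊆ F * (F * A ^ 2) := mul_subset_mul_left hFcover
      _ = F * F * A ^ 2 := by rw [mul_assoc]
end

section
/- (Helfgott) Let G and Z be groups, π : G → Z a homomorphism, and A a finite symmetric subset of G containing the identity. Then for every m ≥ 1, |π(A)^m| / |π(A)| ≤ |A^(m+2)| / |A|. -/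
open Finset Pointwise

theorem stmt_12 {G Z : Type*} [Group G] [Group Z] [DecidableEq G] [DecidableEq Z]
    (π : G →* Z) (A : Finset G)
    (hsym : A⁻¹ = A) (hone : (1 : G) ∈ A)
    (m : ℕ) (hm : 1 ≤ m) :
    (((A.image π) ^ m).card : ℝ) / (A.image π).card ≤ ((A ^ (m + 2)).card : ℝ) / A.card := by
  classical
  set P := A.image π with hP
  have hAne : A.Nonempty := ⟨1, hone⟩
  have hPne : P.Nonempty := hAne.image π
  -- pigeonhole: pick z0 with big fiber
  have hsum : A.card = ∑ z ∈ P, (A.filter (fun a => π a = z)).card :=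
    Finset.card_eq_sum_card_fiberwise (fun a ha => Finset.mem_image_of_mem π ha)
  have hpig : ∃ z0 ∈ P, A.card ≤ P.card * (A.filter (fun a => π a = z0)).card := by
    by_contra h
    push_neg at h
    have : ∑ z ∈ P, P.card * (A.filter (fun a => π a = z)).card < ∑ _z ∈ P, A.card :=
      Finset.sum_lt_sum_of_nonempty hPne (fun z hz => h z hz)
    rw [Finset.sum_const, smul_eq_mul, ← Finset.mul_sum, ← hsum] at this
    exact lt_irrefl _ this
  obtain ⟨z0, hz0, hfib⟩ := hpig
  set F := A.filter (fun a => π a = z0) with hF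
  -- preimages of elements of P^m
  have hPm : P ^ m = (A ^ m).image π := (Finset.image_pow π A m).symm
  have hex : ∀ z ∈ P ^ m, ∃ g ∈ A ^ m, π g = z := by
    intro z hz
    rw [hPm] at hz
    simpa using Finset.mem_image.mp hz
  choose! g hg1 hg2 using hex
  -- injective map (P^m ×ˢ F) → A^(m+2)
  have hmain : (P ^ m).card * F.card ≤ (A ^ (m + 2)).card := by
    rw [← Finset.card_product]
    apply Finset.card_le_card_of_injOn (fun p => g p.1 * p.2)
    · rintro ⟨z, a⟩ hp
      rw [Finset.mem_coe, Finset.mem_product] at hp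
      obtain ⟨hz, ha⟩ := hp
      have haA : a ∈ A := (Finset.mem_filter.mp ha).1
      have : g z * a ∈ A ^ (m + 1) := by
        rw [pow_succ]
        exact Finset.mul_mem_mul (hg1 z hz) haA
      have h2 : A ^ (m + 2) = A ^ (m + 1) * A := by rw [pow_succ]
      rw [h2]
      exact Finset.mem_coe.mpr (by simpa using Finset.mul_mem_mul this hone)
    · rintro ⟨z, a⟩ hp ⟨w, b⟩ hq heq
      simp only [Finset.mem_coe, Finset.mem_product] at hp hq
      obtain ⟨hz, ha⟩ := hp
      obtain ⟨hw, hb⟩ := hq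
      have hπa : π a = z0 := (Finset.mem_filter.mp ha).2
      have hπb : π b = z0 := (Finset.mem_filter.mp hb).2
      simp only at heq
      have hzw : z = w := by
        have := congrArg π heq
        rw [map_mul, map_mul, hg2 z hz, hg2 w hw, hπa, hπb] at this
        exact mul_right_cancel this
      subst hzw
      have : a = b := mul_left_cancel heq
      simp [this]
  -- arithmetic
  have hA0 : (0 : ℝ) < A.card := by exact_mod_cast Finset.card_pos.mpr hAne
  have hP0 : (0 : ℝ) < P.card := by exact_mod_cast Finset.card_pos.mpr hPne
  rw [div_le_div_iff₀ hP0 hA0]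
  have key : (P ^ m).card * A.card ≤ (A ^ (m + 2)).card * P.card := by
    calc (P ^ m).card * A.card ≤ (P ^ m).card * (P.card * F.card) :=
          Nat.mul_le_mul_left _ hfib
      _ = (P ^ m).card * F.card * P.card := by ring
      _ ≤ (A ^ (m + 2)).card * P.card := Nat.mul_le_mul_right _ hmain
  exact_mod_cast key
end

section
/- Let A be a finite symmetric subset of a group G containing the identity with |A³| ≤ K·|A|, and let π : G → Z be a homomorphism. Then |π(A)³| ≤ K³·|π(A)|. -/
open Finset Pointwise

theorem stmt_13 {G Z : Type*} [Group G] [Group Z] [DecidableEq G] [DecidableEq Z]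
    (π : G →* Z) (A : Finset G) (K : ℝ) (hK : 1 ≤ K)
    (hsym : A⁻¹ = A) (hone : (1 : G) ∈ A)
    (h3 : ((A ^ 3).card : ℝ) ≤ K * A.card) :
    (((A.image π) ^ 3).card : ℝ) ≤ K ^ 3 * (A.image π).card := by
  classical
  have hA4 : ((A ^ 4).card : ℝ) ≤ K ^ 2 * A.card :=
    Finset.small_pow_of_small_tripling (m := 4) (by norm_num) h3 hsym
  -- max fiber
  have hne : (A.image π).Nonempty := ⟨π 1, mem_image_of_mem _ hone⟩
  obtain ⟨z₀, hz₀, hmax⟩ := (A.image π).exists_max_image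
    (fun z => #{a ∈ A | π a = z}) hne
  set m : ℕ := #{a ∈ A | π a = z₀} with hm
  set Fib : Finset G := {a ∈ A | π a = z₀} with hFib
  have hmpos : 0 < m := by
    rw [hm]
    obtain ⟨a, ha, rfl⟩ := mem_image.1 hz₀
    exact card_pos.2 ⟨a, mem_filter.2 ⟨ha, rfl⟩⟩
  -- Claim 1 : #A ≤ #(image) * m
  have claim1 : A.card ≤ (A.image π).card * m := by
    rw [mul_comm]; exact card_le_mul_card_image _ m (fun z hz => hmax z hz)
  -- choice of representative
  have key : ∀ z ∈ (A ^ 3).image π, ∃ x ∈ A ^ 3, π x = z := by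
    intro z hz; simpa using mem_image.1 hz
  choose! g hg1 hg2 using key
  -- Claim 2 : #((A^3).image π) * m ≤ #(A^4)
  have claim2 : ((A ^ 3).image π).card * m ≤ (A ^ 4).card := by
    rw [← card_product]
    apply Finset.card_le_card_of_injOn (fun p => g p.1 * p.2)
    · rintro ⟨z, f⟩ hp
      simp only [coe_product, Set.mem_prod, mem_coe, mem_product] at hp
      obtain ⟨hz, hf⟩ := hp
      have hfA : f ∈ A := (mem_filter.1 hf).1
      have : g z * f ∈ A ^ 3 * A := mul_mem_mul (hg1 z hz) hfA
      rw [mem_coe]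
      simpa [pow_succ] using this
    · rintro ⟨z1, f1⟩ hp1 ⟨z2, f2⟩ hp2 h
      simp only [coe_product, Set.mem_prod, mem_coe, mem_product] at hp1 hp2
      obtain ⟨hz1, hf1⟩ := hp1
      obtain ⟨hz2, hf2⟩ := hp2
      have h' : g z1 * f1 = g z2 * f2 := h
      have hπ : π (g z1 * f1) = π (g z2 * f2) := by rw [h']
      have e1 : π f1 = z₀ := (mem_filter.1 hf1).2
      have e2 : π f2 = z₀ := (mem_filter.1 hf2).2
      have hz : z1 = z2 := by
        have := hπ
        rw [map_mul, map_mul, e1, e2, hg2 z1 hz1, hg2 z2 hz2] at this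
        exact mul_right_cancel this
      subst hz
      have hf : f1 = f2 := mul_left_cancel (h' : g z1 * f1 = g z1 * f2)
      simp [hf]
  -- assemble over ℝ
  have himg : (A.image π) ^ 3 = (A ^ 3).image π := (Finset.image_pow π A 3).symm
  rw [himg]
  have hmR : (0 : ℝ) < m := by exact_mod_cast hmpos
  have c1R : (A.card : ℝ) ≤ (A.image π).card * m := by exact_mod_cast claim1
  have c2R : (((A ^ 3).image π).card : ℝ) * m ≤ (A ^ 4).card := by exact_mod_cast claim2
  have hK2 : (0 : ℝ) ≤ K ^ 2 := by positivity
  have : (((A ^ 3).image π).card : ℝ) * m ≤ K ^ 2 * ((A.image π).card * m) :=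
    c2R.trans (hA4.trans (by nlinarith))
  have h2 : (((A ^ 3).image π).card : ℝ) ≤ K ^ 2 * (A.image π).card := by
    rw [mul_comm (K ^ 2) _, mul_assoc] at this
    have := le_of_mul_le_mul_right (by linarith [this] : (((A ^ 3).image π).card : ℝ) * m ≤ ((A.image π).card * K ^ 2) * m) hmR
    linarith
  have : K ^ 2 * ((A.image π).card : ℝ) ≤ K ^ 3 * (A.image π).card := by
    have : K ^ 2 ≤ K ^ 3 := pow_le_pow_right₀ (by linarith) (by norm_num)
    have hc : (0 : ℝ) ≤ (A.image π).card := by positivity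
    nlinarith
  linarith
end

section
/- Let A and B be finite symmetric subsets of a group G, each containing the identity. Then for all m, n ≥ 2, |A^m ∩ B^n| / |A² ∩ B²| ≤ (|A^(m+1)|/|A|) · (|B^(n+1)|/|B|). -/
open Finset Pointwise

theorem stmt_14 {G : Type*} [Group G] [DecidableEq G]
    (A B : Finset G)
    (hAsym : A⁻¹ = A) (hAone : (1 : G) ∈ A)
    (hBsym : B⁻¹ = B) (hBone : (1 : G) ∈ B)
    (m n : ℕ) (hm : 2 ≤ m) (hn : 2 ≤ n) :
    ((A ^ m ∩ B ^ n).card : ℝ) / ((A ^ 2 ∩ B ^ 2).card) ≤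
      (((A ^ (m + 1)).card : ℝ) / A.card) * (((B ^ (n + 1)).card : ℝ) / B.card) := by
  classical
  set P : G → G → Prop := fun u v => ∃ x : G, x⁻¹ * u ∈ A ∧ x⁻¹ * v ∈ B with hP
  let f : G → G → G := fun u v => if h : P u v then h.choose else 1
  have hf : ∀ u v, P u v → ((f u v)⁻¹ * u ∈ A ∧ (f u v)⁻¹ * v ∈ B) := by
    intro u v h
    simp only [f, dif_pos h]
    exact h.choose_spec
  have hAinv : ∀ a : G, a ∈ A → a⁻¹ ∈ A := by
    intro a ha; rw [← hAsym]; exact Finset.inv_mem_inv ha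
  have hBinv : ∀ a : G, a ∈ B → a⁻¹ ∈ B := by
    intro a ha; rw [← hBsym]; exact Finset.inv_mem_inv ha
  have key : ((A ^ m ∩ B ^ n) ×ˢ (A ×ˢ B)).card ≤
      ((A ^ (m+1)) ×ˢ ((B ^ (n+1)) ×ˢ (A ^ 2 ∩ B ^ 2))).card := by
    apply Finset.card_le_card_of_injOn
      (fun p => (p.1 * p.2.1, p.1 * p.2.2, p.1⁻¹ * f (p.1 * p.2.1) (p.1 * p.2.2)))
    · rintro ⟨x, a, b⟩ hp
      simp only [mem_coe, mem_product, mem_inter] at hp ⊢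
      obtain ⟨⟨hxA, hxB⟩, ha, hb⟩ := hp
      have hPx : P (x*a) (x*b) :=
        ⟨x, by simpa [inv_mul_cancel_left] using ha, by simpa [inv_mul_cancel_left] using hb⟩
      obtain ⟨h1, h2⟩ := hf _ _ hPx
      refine ⟨?_, ?_, ?_, ?_⟩
      · rw [pow_succ]; exact mul_mem_mul hxA ha
      · rw [pow_succ]; exact mul_mem_mul hxB hb
      · have heq : x⁻¹ * f (x*a) (x*b) = a * ((f (x*a) (x*b))⁻¹ * (x*a))⁻¹ := by
          group
        rw [heq, sq]
        exact mul_mem_mul ha (hAinv _ h1)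
      · have heq : x⁻¹ * f (x*a) (x*b) = b * ((f (x*a) (x*b))⁻¹ * (x*b))⁻¹ := by
          group
        rw [heq, sq]
        exact mul_mem_mul hb (hBinv _ h2)
    · rintro ⟨x, a, b⟩ _ ⟨y, c, d⟩ _ h
      simp only [Prod.mk.injEq] at h
      obtain ⟨h1, h2, h3⟩ := h
      rw [h1, h2] at h3
      have hxy : x = y := by
        have := mul_right_cancel h3
        exact inv_injective this
      subst hxy
      have hac : a = c := mul_left_cancel h1
      have hbd : b = d := mul_left_cancel h2
      simp [hac, hbd]
  rw [Finset.card_product, Finset.card_product, Finset.card_product,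
    Finset.card_product] at key
  have hA : (0 : ℝ) < A.card := by exact_mod_cast Finset.card_pos.mpr ⟨1, hAone⟩
  have hB : (0 : ℝ) < B.card := by exact_mod_cast Finset.card_pos.mpr ⟨1, hBone⟩
  have hD : (0 : ℝ) < ((A ^ 2 ∩ B ^ 2).card : ℝ) := by
    have : (1 : G) ∈ A ^ 2 ∩ B ^ 2 := by
      rw [mem_inter, sq, sq]
      exact ⟨by simpa using mul_mem_mul hAone hAone, by simpa using mul_mem_mul hBone hBone⟩
    exact_mod_cast Finset.card_pos.mpr ⟨1, this⟩
  rw [div_mul_div_comm, div_le_div_iff₀ hD (by positivity)]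
  have key' : ((A ^ m ∩ B ^ n).card : ℝ) * (A.card * B.card) ≤
      ((A ^ (m+1)).card : ℝ) * (((B ^ (n+1)).card : ℝ) * ((A ^ 2 ∩ B ^ 2).card : ℝ)) := by
    exact_mod_cast key
  nlinarith [key']
end

section
/- Let A and B be finite symmetric subsets of a group G containing the identity with |A³| ≤ K·|A| and |B³| ≤ L·|B|. Then |(A² ∩ B²)³| ≤ (KL)⁵·|A² ∩ B²|. -/
open Finset Pointwise

private lemma count_lemma {G : Type*} [Group G] [DecidableEq G]
    (A B : Finset G) (hAsym : A⁻¹ = A) (hBsym : B⁻¹ = B) :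
    (A ^ 6 ∩ B ^ 6).card * A.card * B.card ≤
      (A ^ 7).card * (B ^ 7).card * (A ^ 2 ∩ B ^ 2).card := by
  classical
  set S := A ^ 2 ∩ B ^ 2 with hS
  let P : G → G → Prop := fun u v => ∃ x ∈ A ^ 6 ∩ B ^ 6, ∃ a ∈ A, ∃ b ∈ B, x * a = u ∧ x * b = v
  let g : G → G → G := fun u v => if h : P u v then h.choose else 1
  have hg : ∀ u v, P u v → (g u v ∈ A ^ 6 ∩ B ^ 6 ∧
      ∃ a ∈ A, ∃ b ∈ B, g u v * a = u ∧ g u v * b = v) := by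
    intro u v h
    simp only [g, dif_pos h]
    obtain ⟨hx, rest⟩ := h.choose_spec
    exact ⟨hx, rest⟩
  have key : ((A ^ 6 ∩ B ^ 6) ×ˢ A ×ˢ B).card ≤ ((A ^ 7) ×ˢ (B ^ 7) ×ˢ S).card := by
    apply Finset.card_le_card_of_injOn
      (fun p => (p.1 * p.2.1, p.1 * p.2.2, (g (p.1 * p.2.1) (p.1 * p.2.2))⁻¹ * p.1))
    · rintro ⟨x, a, b⟩ hp
      simp only [Finset.mem_coe, Finset.mem_product] at hp ⊢
      obtain ⟨hx, ha, hb⟩ := hp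
      have hP : P (x * a) (x * b) := ⟨x, hx, a, ha, b, hb, rfl, rfl⟩
      obtain ⟨hx0, a0, ha0, b0, hb0, hua, hub⟩ := hg _ _ hP
      simp only [Finset.mem_inter] at hx hx0
      set y := g (x * a) (x * b) with hy
      refine ⟨?_, ?_, ?_⟩
      · have : x * a ∈ A ^ 6 * A := Finset.mul_mem_mul hx.1 ha
        simpa [← pow_succ] using this
      · have : x * b ∈ B ^ 6 * B := Finset.mul_mem_mul hx.2 hb
        simpa [← pow_succ] using this
      · have h1 : y⁻¹ * x = a0 * a⁻¹ := by
          have ha0' : a0 = y⁻¹ * (x * a) := by rw [← hua]; group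
          rw [ha0']; group
        have h2 : y⁻¹ * x = b0 * b⁻¹ := by
          have hb0' : b0 = y⁻¹ * (x * b) := by rw [← hub]; group
          rw [hb0']; group
        rw [hS, Finset.mem_inter]
        constructor
        · rw [h1, sq]
          exact Finset.mul_mem_mul ha0 (by rw [← hAsym]; exact Finset.inv_mem_inv ha)
        · rw [h2, sq]
          exact Finset.mul_mem_mul hb0 (by rw [← hBsym]; exact Finset.inv_mem_inv hb)
    · rintro ⟨x1, a1, b1⟩ h1 ⟨x2, a2, b2⟩ h2 heq
      simp only [Prod.mk.injEq] at heq
      obtain ⟨e1, e2, e3⟩ := heq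
      have hx : x1 = x2 := by
        rw [e1, e2] at e3
        exact mul_left_cancel e3
      subst hx
      have ha : a1 = a2 := mul_left_cancel e1
      have hb : b1 = b2 := mul_left_cancel e2
      simp [ha, hb]
  simpa [Finset.card_product, mul_assoc] using key

theorem stmt_15 {G : Type*} [Group G] [DecidableEq G]
    (A B : Finset G) (K L : ℝ) (hK : 1 ≤ K) (hL : 1 ≤ L)
    (hAsym : A⁻¹ = A) (hAone : (1 : G) ∈ A)
    (hBsym : B⁻¹ = B) (hBone : (1 : G) ∈ B)
    (hA3 : ((A ^ 3).card : ℝ) ≤ K * A.card)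
    (hB3 : ((B ^ 3).card : ℝ) ≤ L * B.card) :
    (((A ^ 2 ∩ B ^ 2) ^ 3).card : ℝ) ≤ (K * L) ^ 5 * (A ^ 2 ∩ B ^ 2).card := by
  set S := A ^ 2 ∩ B ^ 2 with hS
  have hA7 : ((A ^ 7).card : ℝ) ≤ K ^ 5 * A.card := by
    have h := Finset.small_pow_of_small_tripling (m := 7) (by norm_num) hA3 hAsym
    norm_num at h
    exact h
  have hB7 : ((B ^ 7).card : ℝ) ≤ L ^ 5 * B.card := by
    have h := Finset.small_pow_of_small_tripling (m := 7) (by norm_num) hB3 hBsym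
    norm_num at h
    exact h
  have hsub : S ^ 3 ⊆ A ^ 6 ∩ B ^ 6 := by
    intro x hx
    rw [Finset.mem_inter]
    constructor
    · have h : S ^ 3 ⊆ (A ^ 2) ^ 3 := Finset.pow_subset_pow_left Finset.inter_subset_left
      have := h hx
      rwa [← pow_mul] at this
    · have h : S ^ 3 ⊆ (B ^ 2) ^ 3 := Finset.pow_subset_pow_left Finset.inter_subset_right
      have := h hx
      rwa [← pow_mul] at this
  have hcount := count_lemma A B hAsym hBsym
  have hApos : (0 : ℝ) < A.card := by
    exact_mod_cast Finset.card_pos.2 ⟨1, hAone⟩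
  have hBpos : (0 : ℝ) < B.card := by
    exact_mod_cast Finset.card_pos.2 ⟨1, hBone⟩
  have chain : ((S ^ 3).card : ℝ) * (A.card * B.card) ≤
      (K * L) ^ 5 * S.card * (A.card * B.card) := by
    calc ((S ^ 3).card : ℝ) * (A.card * B.card)
        ≤ ((A ^ 6 ∩ B ^ 6).card : ℝ) * (A.card * B.card) := by
          have hc : ((S ^ 3).card : ℝ) ≤ ((A ^ 6 ∩ B ^ 6).card : ℝ) := by
            exact_mod_cast Finset.card_le_card hsub
          gcongr
      _ ≤ ((A ^ 7).card : ℝ) * (B ^ 7).card * S.card := by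
          rw [← mul_assoc]
          exact_mod_cast hcount
      _ ≤ (K ^ 5 * A.card) * (L ^ 5 * B.card) * S.card := by
          have h0 : (0 : ℝ) ≤ ((B ^ 7).card : ℝ) := by positivity
          gcongr
      _ = (K * L) ^ 5 * S.card * (A.card * B.card) := by ring
  have hAB : (0 : ℝ) < A.card * B.card := by positivity
  exact le_of_mul_le_mul_right chain hAB
end

section
/- If A is a K-approximate subgroup and B is an L-approximate subgroup of a group G, then A² ∩ B² is a (KL)³-approximate subgroup of G. -/
open Pointwise

theorem stmt_16 {G : Type*} [Group G]
    (A B : Set G) (K L : ℝ)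
    (hAsym : A⁻¹ = A) (hAone : (1 : G) ∈ A)
    (hBsym : B⁻¹ = B) (hBone : (1 : G) ∈ B)
    (X : Finset G) (hX : (X.card : ℝ) ≤ K) (hAcov : A * A ⊆ ↑X * A)
    (Y : Finset G) (hY : (Y.card : ℝ) ≤ L) (hBcov : B * B ⊆ ↑Y * B) :
    (A ^ 2 ∩ B ^ 2)⁻¹ = A ^ 2 ∩ B ^ 2 ∧ (1 : G) ∈ A ^ 2 ∩ B ^ 2 ∧
      ∃ Z : Finset G, (Z.card : ℝ) ≤ (K * L) ^ 3 ∧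
        (A ^ 2 ∩ B ^ 2) * (A ^ 2 ∩ B ^ 2) ⊆ ↑Z * (A ^ 2 ∩ B ^ 2) := by
  classical
  have hA2 : (A ^ 2)⁻¹ = A ^ 2 := by rw [sq, mul_inv_rev, hAsym]
  have hB2 : (B ^ 2)⁻¹ = B ^ 2 := by rw [sq, mul_inv_rev, hBsym]
  have h1A : (1 : G) ∈ A ^ 2 := by
    rw [sq]; simpa using Set.mul_mem_mul hAone hAone
  have h1B : (1 : G) ∈ B ^ 2 := by
    rw [sq]; simpa using Set.mul_mem_mul hBone hBone
  refine ⟨by rw [Set.inter_inv, hA2, hB2], ⟨h1A, h1B⟩, ?_⟩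
  -- covering lemmas
  have hX1 : (1 : ℝ) ≤ X.card := by
    have : ((1 : G) * 1) ∈ (↑X : Set G) * A := hAcov (Set.mul_mem_mul hAone hAone)
    obtain ⟨x, hx, -⟩ := this
    have : X.Nonempty := ⟨x, hx⟩
    exact_mod_cast Finset.card_pos.mpr this
  have hY1 : (1 : ℝ) ≤ Y.card := by
    have : ((1 : G) * 1) ∈ (↑Y : Set G) * B := hBcov (Set.mul_mem_mul hBone hBone)
    obtain ⟨y, hy, -⟩ := this
    have : Y.Nonempty := ⟨y, hy⟩
    exact_mod_cast Finset.card_pos.mpr this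
  have hK0 : (0 : ℝ) ≤ K := le_trans (by linarith) hX
  have hL0 : (0 : ℝ) ≤ L := le_trans (by linarith) hY
  have hA4 : A ^ 2 * A ^ 2 ⊆ ↑(X * X * X) * A := by
    have h3 : A * A * A ⊆ ↑(X * X) * A := by
      calc A * A * A ⊆ ↑X * A * A := Set.mul_subset_mul_right hAcov
        _ = ↑X * (A * A) := mul_assoc _ _ _
        _ ⊆ ↑X * (↑X * A) := Set.mul_subset_mul_left hAcov
        _ = ↑(X * X) * A := by rw [Finset.coe_mul, mul_assoc]
    calc A ^ 2 * A ^ 2 = A * A * A * A := by rw [sq]; group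
      _ ⊆ ↑(X * X) * A * A := Set.mul_subset_mul_right h3
      _ = ↑(X * X) * (A * A) := mul_assoc _ _ _
      _ ⊆ ↑(X * X) * (↑X * A) := Set.mul_subset_mul_left hAcov
      _ = ↑(X * X * X) * A := by simp only [Finset.coe_mul]; group
  have hB4 : B ^ 2 * B ^ 2 ⊆ ↑(Y * Y * Y) * B := by
    have h3 : B * B * B ⊆ ↑(Y * Y) * B := by
      calc B * B * B ⊆ ↑Y * B * B := Set.mul_subset_mul_right hBcov
        _ = ↑Y * (B * B) := mul_assoc _ _ _
        _ ⊆ ↑Y * (↑Y * B) := Set.mul_subset_mul_left hBcov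
        _ = ↑(Y * Y) * B := by rw [Finset.coe_mul, mul_assoc]
    calc B ^ 2 * B ^ 2 = B * B * B * B := by rw [sq]; group
      _ ⊆ ↑(Y * Y) * B * B := Set.mul_subset_mul_right h3
      _ = ↑(Y * Y) * (B * B) := mul_assoc _ _ _
      _ ⊆ ↑(Y * Y) * (↑Y * B) := Set.mul_subset_mul_left hBcov
      _ = ↑(Y * Y * Y) * B := by simp only [Finset.coe_mul]; group
  -- choose representatives
  set f : G × G → G := fun p =>
    if h : (({p.1} * A ∩ ({p.2} * B)) : Set G).Nonempty then h.some else 1 with hf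
  refine ⟨((X * X * X) ×ˢ (Y * Y * Y)).image f, ?_, ?_⟩
  · have hcard : (((X * X * X) ×ˢ (Y * Y * Y)).image f).card
        ≤ (X.card : ℝ) ^ 3 * (Y.card : ℝ) ^ 3 := by
      have h1 : (((X * X * X) ×ˢ (Y * Y * Y)).image f).card
          ≤ (X * X * X).card * (Y * Y * Y).card := by
        refine le_trans (Finset.card_image_le) ?_
        rw [Finset.card_product]
      have hx3 : (X * X * X).card ≤ X.card ^ 3 := by
        calc (X * X * X).card ≤ (X * X).card * X.card := Finset.card_mul_le
          _ ≤ X.card * X.card * X.card :=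
            Nat.mul_le_mul_right _ Finset.card_mul_le
          _ = X.card ^ 3 := by ring
      have hy3 : (Y * Y * Y).card ≤ Y.card ^ 3 := by
        calc (Y * Y * Y).card ≤ (Y * Y).card * Y.card := Finset.card_mul_le
          _ ≤ Y.card * Y.card * Y.card :=
            Nat.mul_le_mul_right _ Finset.card_mul_le
          _ = Y.card ^ 3 := by ring
      have := Nat.mul_le_mul hx3 hy3
      have := le_trans h1 this
      exact_mod_cast this
    calc ((((X * X * X) ×ˢ (Y * Y * Y)).image f).card : ℝ)
        ≤ (X.card : ℝ) ^ 3 * (Y.card : ℝ) ^ 3 := hcard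
      _ ≤ K ^ 3 * L ^ 3 := by
          have : (0:ℝ) ≤ (X.card : ℝ) := by positivity
          gcongr
      _ = (K * L) ^ 3 := by ring
  · intro w hw
    obtain ⟨u, hu, v, hv, rfl⟩ := hw
    have hwA : u * v ∈ ↑(X * X * X) * A := hA4 (Set.mul_mem_mul hu.1 hv.1)
    have hwB : u * v ∈ ↑(Y * Y * Y) * B := hB4 (Set.mul_mem_mul hu.2 hv.2)
    obtain ⟨x, hx, a, ha, hxa⟩ := hwA
    obtain ⟨y, hy, b, hb, hyb⟩ := hwB
    have hne : (({x} * A ∩ ({y} * B)) : Set G).Nonempty := by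
      refine ⟨u * v, ⟨x, rfl, a, ha, hxa⟩, ⟨y, rfl, b, hb, hyb⟩⟩
    set z := f (x, y) with hz
    have hzval : z = hne.some := by rw [hz, hf]; exact dif_pos hne
    have hzmem := hne.some_mem
    rw [← hzval] at hzmem
    obtain ⟨⟨x', hx', a', ha', hxa'⟩, ⟨y', hy', b', hb', hyb'⟩⟩ := hzmem
    rw [Set.mem_singleton_iff] at hx' hy'
    rw [hx'] at hxa'
    rw [hy'] at hyb'
    refine ⟨z, ?_, z⁻¹ * (u * v), ⟨?_, ?_⟩, by group⟩
    · exact Finset.mem_coe.mpr (Finset.mem_image.mpr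
        ⟨(x, y), Finset.mem_product.mpr ⟨Finset.mem_coe.mp hx, Finset.mem_coe.mp hy⟩, rfl⟩)
    · have : z⁻¹ * (u * v) = a'⁻¹ * a := by
        rw [← hxa, ← hxa']; group
      rw [this, sq]
      have ha'i : a'⁻¹ ∈ A := by rw [← hAsym]; simpa using ha'
      exact Set.mul_mem_mul ha'i ha
    · have : z⁻¹ * (u * v) = b'⁻¹ * b := by
        rw [← hyb, ← hyb']; group
      rw [this, sq]
      have hb'i : b'⁻¹ ∈ B := by rw [← hBsym]; simpa using hb'
      exact Set.mul_mem_mul hb'i hb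
end
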